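/- One-to-one recovery of separators (Proposition): Let S and S' be open connected subsets of ℝ^d and h : S → S' a smooth diffeomorphism. Let 𝒢 be a finite set of axis-separators of S with union G = ⋃_{H ∈ 𝒢} H, and let 𝒢' be a finite set of axis-separators of S' with union G' = ⋃_{H' ∈ 𝒢'} H'. If h(G) = G', then {h(H) : H ∈ 𝒢} = 𝒢', and the map H ↦ h(H) is a bijection from 𝒢 onto 𝒢'. -/

import Mathlib

open Set MeasureTheory Topology

noncomputable section

abbrev Euc (d : ℕ) := EuclideanSpace ℝ (Fin d)

/-- Axis separator: points of `S` whose `i`-th coordinate equals `τ`. -/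
def Gamma {d : ℕ} (S : Set (Euc d)) (i : Fin d) (τ : ℝ) : Set (Euc d) :=
  {z | z ∈ S ∧ z i = τ}

/-- Positive half: points of `S` whose `i`-th coordinate is greater than `τ`. -/
def GammaPos {d : ℕ} (S : Set (Euc d)) (i : Fin d) (τ : ℝ) : Set (Euc d) :=
  {z | z ∈ S ∧ τ < z i}

/-- Negative half: points of `S` whose `i`-th coordinate is less than `τ`. -/
def GammaNeg {d : ℕ} (S : Set (Euc d)) (i : Fin d) (τ : ℝ) : Set (Euc d) :=
  {z | z ∈ S ∧ z i < τ}

/-- `Γ_S(i,τ)` is an axis-separator of `S`: it is nonempty and connected, and both of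
its halves are nonempty and connected. (`IsConnected` includes nonemptiness.) -/
def IsAxisSeparator {d : ℕ} (S : Set (Euc d)) (i : Fin d) (τ : ℝ) : Prop :=
  IsConnected (Gamma S i τ) ∧ IsConnected (GammaPos S i τ) ∧ IsConnected (GammaNeg S i τ)

/-- A smooth diffeomorphism from `S` onto `S'` with explicit inverse `hinv`. -/
structure IsSmoothDiffeoOn {d : ℕ} (h hinv : Euc d → Euc d) (S S' : Set (Euc d)) : Prop where
  mapsTo : Set.MapsTo h S S'
  mapsTo_inv : Set.MapsTo hinv S' S
  left_inv : ∀ z ∈ S, hinv (h z) = z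
  right_inv : ∀ z' ∈ S', h (hinv z') = z'
  smooth : ContDiffOn ℝ (⊤ : ℕ∞) h S
  smooth_inv : ContDiffOn ℝ (⊤ : ℕ∞) hinv S'

/-- A discrete coordination on `S`: for each axis `i`, a strictly increasing nonempty tuple
of thresholds, each giving an axis-separator of `S`. -/
structure DiscreteCoordination {d : ℕ} (S : Set (Euc d)) where
  n : Fin d → ℕ
  n_pos : ∀ i, 0 < n i
  A : (i : Fin d) → Fin (n i) → ℝ
  mono : ∀ i, StrictMono (A i)
  sep : ∀ i k, IsAxisSeparator S i (A i k)

/-- The grid of a discrete coordination: the union of all its axis-separators. -/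
def DiscreteCoordination.grid {d : ℕ} {S : Set (Euc d)} (C : DiscreteCoordination S) :
    Set (Euc d) :=
  ⋃ (i : Fin d), ⋃ (k : Fin (C.n i)), Gamma S i (C.A i k)

/-- The parallel-separator-set along axis `i`. -/
def DiscreteCoordination.axisSet {d : ℕ} {S : Set (Euc d)} (C : DiscreteCoordination S)
    (i : Fin d) : Set (Set (Euc d)) :=
  {H | ∃ k : Fin (C.n i), H = Gamma S i (C.A i k)}

/-- The axis-separator set of a discrete coordination. -/
def DiscreteCoordination.sepSet {d : ℕ} {S : Set (Euc d)} (C : DiscreteCoordination S) :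
    Set (Set (Euc d)) :=
  {H | ∃ (i : Fin d) (k : Fin (C.n i)), H = Gamma S i (C.A i k)}

/-- A backbone: a choice of one separator per axis such that they all meet in a single
point and each of them meets every separator of the grid lying on a different axis. -/
def DiscreteCoordination.HasBackbone {d : ℕ} {S : Set (Euc d)}
    (C : DiscreteCoordination S) : Prop :=
  ∃ kstar : (i : Fin d) → Fin (C.n i),
    (∃ z : Euc d, (⋂ (i : Fin d), Gamma S i (C.A i (kstar i))) = {z}) ∧
    ∀ (i j : Fin d), j ≠ i → ∀ k : Fin (C.n j),
      (Gamma S i (C.A i (kstar i)) ∩ Gamma S j (C.A j k)).Nonempty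

/-- Quantization: `Q(x;T) = Σ_k 1[x ≥ T_k]`. -/
def Q {K : ℕ} (x : ℝ) (T : Fin K → ℝ) : ℕ :=
  (Finset.univ.filter fun k : Fin K => T k ≤ x).card

/-- Quantization with order reversal: `Q⁻(x;T) = Σ_k 1[x ≤ T_k]`. -/
def Qneg {K : ℕ} (x : ℝ) (T : Fin K → ℝ) : ℕ :=
  (Finset.univ.filter fun k : Fin K => x ≤ T k).card

/-- Signed quantization: `Q^{+1} = Q` and `Q^{-1} = Q⁻`. -/
def Qsgn {K : ℕ} (s : ℤ) (x : ℝ) (T : Fin K → ℝ) : ℕ :=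
  if s = 1 then Q x T else Qneg x T

/-- `μ` (absolutely continuous w.r.t. Lebesgue) has a non-removable discontinuity at `z`
if every measurable density of `μ` w.r.t. Lebesgue measure is discontinuous at `z`. -/
def HasNonRemovableDiscont {d : ℕ} (μ : Measure (Euc d)) (z : Euc d) : Prop :=
  ∀ q : Euc d → ENNReal, Measurable q → μ = volume.withDensity q → ¬ ContinuousAt q z

/-- `T` has exactly two connected components, namely `Cp` and `Cm`. -/
def TwoComponents {d : ℕ} (T Cp Cm : Set (Euc d)) : Prop :=
  Cp ≠ Cm ∧
  (∃ x ∈ T, connectedComponentIn T x = Cp) ∧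
  (∃ x ∈ T, connectedComponentIn T x = Cm) ∧
  ∀ x ∈ T, connectedComponentIn T x = Cp ∨ connectedComponentIn T x = Cm

/-- The intersection set of a finite family of separators: points lying on at least two
distinct members. -/
def interSet {d M : ℕ} (H : Fin M → Set (Euc d)) : Set (Euc d) :=
  ⋃ (m : Fin M), ⋃ (m' : Fin M), ⋃ (_ : m ≠ m'), H m ∩ H m'


section OneToOneAux

/-- Two zeros of a differentiable function with nonvanishing derivative on an interval
cannot both exist (Rolle). -/
lemma zero_subsingleton_aux {f f' : ℝ → ℝ} {a b : ℝ}
    (hd : ∀ t ∈ Set.Icc a b, HasDerivAt f (f' t) t)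
    (hne : ∀ t ∈ Set.Icc a b, f' t ≠ 0) :
    {t | t ∈ Set.Icc a b ∧ f t = 0}.Subsingleton := by
  have key : ∀ x y : ℝ, x ∈ Set.Icc a b ∧ f x = 0 → y ∈ Set.Icc a b ∧ f y = 0 →
      x < y → False := by
    intro x y hx hy hxy
    have hsub : Set.Icc x y ⊆ Set.Icc a b := Set.Icc_subset_Icc hx.1.1 hy.1.2
    have hcont : ContinuousOn f (Set.Icc x y) := fun t ht =>
      ((hd t (hsub ht)).continuousAt).continuousWithinAt
    obtain ⟨c, hc, hc0⟩ := exists_deriv_eq_zero hxy hcont (hx.2.trans hy.2.symm)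
    have hcmem : c ∈ Set.Icc a b := hsub ⟨le_of_lt hc.1, le_of_lt hc.2⟩
    have hder := (hd c hcmem).deriv
    rw [hc0] at hder
    exact hne c hcmem hder.symm
  intro x hx y hy
  by_contra hxy
  rcases lt_trichotomy x y with hlt | heq | hgt
  · exact key x y hx hy hlt
  · exact hxy heq
  · exact key y x hy hx hgt

/-- A nondegenerate finite family of functions cannot cover a whole segment with zeros. -/
lemma segment_contra_aux {ι : Type*} (s : Finset ι) {f : ι → ℝ → ℝ} {f' : ι → ℝ → ℝ} {δ : ℝ}
    (hδ : 0 < δ)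
    (hd : ∀ p ∈ s, ∀ t ∈ Set.Icc (0:ℝ) δ, HasDerivAt (f p) (f' p t) t)
    (hne : ∀ p ∈ s, ∀ t ∈ Set.Icc (0:ℝ) δ, f' p t ≠ 0)
    (hcov : ∀ t ∈ Set.Icc (0:ℝ) δ, ∃ p ∈ s, f p t = 0) : False := by
  have hsub : Set.Icc (0:ℝ) δ ⊆ ⋃ p ∈ s, {t | t ∈ Set.Icc (0:ℝ) δ ∧ f p t = 0} := by
    intro t ht
    obtain ⟨p, hp, hfp⟩ := hcov t ht
    exact Set.mem_biUnion hp ⟨ht, hfp⟩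
  have hfin : (Set.Icc (0:ℝ) δ).Finite :=
    (Set.Finite.biUnion s.finite_toSet fun p hp =>
      ((zero_subsingleton_aux (hd p hp) (hne p hp)).finite)).subset hsub
  exact Set.Icc_infinite hδ hfin

/-- A point avoiding the kernels of finitely many functionals, inside a given subspace. -/
lemma exists_forall_ne_aux {ι : Type*} {E : Type*} [AddCommGroup E] [Module ℝ E]
    (W : Submodule ℝ E) (s : Finset ι) (L : ι → E →ₗ[ℝ] ℝ)
    (hL : ∀ m ∈ s, ∃ w ∈ W, L m w ≠ 0) :
    ∃ v ∈ W, ∀ m ∈ s, L m v ≠ 0 := by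
  classical
  induction s using Finset.induction_on with
  | empty => exact ⟨0, W.zero_mem, by simp⟩
  | @insert a s ha ih =>
    obtain ⟨v, hvW, hv⟩ := ih (fun k hk => hL k (Finset.mem_insert_of_mem hk))
    obtain ⟨w, hwW, hw⟩ := hL a (Finset.mem_insert_self a s)
    obtain ⟨t, ht⟩ := Infinite.exists_notMem_finset
      ((insert a s).image fun k => -(L k v) / (L k w))
    refine ⟨v + t • w, W.add_mem hvW (W.smul_mem t hwW), ?_⟩
    intro k hk
    have hLk : L k (v + t • w) = L k v + t * L k w := by
      simp [map_add, _root_.map_smul, smul_eq_mul]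
    by_cases hkw : L k w = 0
    · have hks : k ∈ s := by
        rcases Finset.mem_insert.1 hk with rfl | hks
        · exact absurd hkw hw
        · exact hks
      rw [hLk, hkw]
      simpa using hv k hks
    · intro h0
      rw [hLk] at h0
      have : t = -(L k v) / (L k w) := by field_simp; linarith
      exact ht (Finset.mem_image.2 ⟨k, hk, this.symm⟩)

lemma finrank_ker_proj_aux (d : ℕ) (i : Fin d) :
    Module.finrank ℝ (LinearMap.ker (EuclideanSpace.projₗ (𝕜 := ℝ) i)) + 1 = d := by
  have hh := LinearMap.finrank_range_add_finrank_ker (EuclideanSpace.projₗ (𝕜 := ℝ) i)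
  have hsurj : LinearMap.range (EuclideanSpace.projₗ (𝕜 := ℝ) i) = ⊤ := by
    rw [LinearMap.range_eq_top]
    intro c
    exact ⟨EuclideanSpace.single i c, by simp⟩
  rw [hsurj] at hh
  simp [finrank_euclideanSpace, finrank_top] at hh
  omega

lemma dim_contra_aux {d : ℕ} {A : Euc d →L[ℝ] Euc d} (hA : Function.Injective A)
    {i j k : Fin d} (hjk : j ≠ k)
    (hj : ∀ v : Euc d, v i = 0 → A v j = 0) (hk : ∀ v : Euc d, v i = 0 → A v k = 0) :
    False := by
  classical
  set W : Submodule ℝ (Euc d) := LinearMap.ker (EuclideanSpace.projₗ (𝕜 := ℝ) i) with hW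
  set Kj : Submodule ℝ (Euc d) := LinearMap.ker (EuclideanSpace.projₗ (𝕜 := ℝ) j) with hKj
  set Kk : Submodule ℝ (Euc d) := LinearMap.ker (EuclideanSpace.projₗ (𝕜 := ℝ) k) with hKk
  have hmemW : ∀ v : Euc d, v ∈ W ↔ v i = 0 := by intro v; simp [hW, LinearMap.mem_ker]
  have hmemKj : ∀ v : Euc d, v ∈ Kj ↔ v j = 0 := by intro v; simp [hKj, LinearMap.mem_ker]
  have hmemKk : ∀ v : Euc d, v ∈ Kk ↔ v k = 0 := by intro v; simp [hKk, LinearMap.mem_ker]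
  have hmap : W.map (A : Euc d →ₗ[ℝ] Euc d) ≤ Kj ⊓ Kk := by
    rintro u hu
    obtain ⟨v, hv, rfl⟩ := hu
    exact ⟨(hmemKj _).2 (hj v ((hmemW v).1 hv)), (hmemKk _).2 (hk v ((hmemW v).1 hv))⟩
  have hrankmap : Module.finrank ℝ (W.map (A : Euc d →ₗ[ℝ] Euc d)) = Module.finrank ℝ W :=
    (LinearEquiv.finrank_eq (Submodule.equivMapOfInjective (A : Euc d →ₗ[ℝ] Euc d) hA W)).symm
  have hlt : (Kj ⊓ Kk : Submodule ℝ (Euc d)) < Kj := by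
    refine lt_of_le_of_ne inf_le_left (fun hEq => ?_)
    have h1 : EuclideanSpace.single k (1:ℝ) ∈ Kj := by
      rw [hmemKj]
      simp [EuclideanSpace.single_apply]
      exact hjk
    rw [← hEq] at h1
    have h2 := (hmemKk _).1 h1.2
    simp [EuclideanSpace.single_apply] at h2
  have h1 : Module.finrank ℝ W ≤ Module.finrank ℝ (Kj ⊓ Kk : Submodule ℝ (Euc d)) := by
    rw [← hrankmap]; exact Submodule.finrank_mono hmap
  have h2 : Module.finrank ℝ (Kj ⊓ Kk : Submodule ℝ (Euc d)) < Module.finrank ℝ Kj :=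
    Submodule.finrank_lt_finrank_of_lt hlt
  have h3 : Module.finrank ℝ W + 1 = d := finrank_ker_proj_aux d i
  have h4 : Module.finrank ℝ Kj + 1 = d := finrank_ker_proj_aux d j
  omega

lemma fderiv_inj_aux {d : ℕ} {S S' : Set (Euc d)} (hS : IsOpen S) (hS' : IsOpen S')
    {h hinv : Euc d → Euc d} (hd : IsSmoothDiffeoOn h hinv S S') {z : Euc d} (hz : z ∈ S) :
    Function.Injective (fderiv ℝ h z) := by
  have hz' : h z ∈ S' := hd.mapsTo hz
  have Hh : DifferentiableAt ℝ h z :=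
    (hd.smooth.differentiableOn (by simp)).differentiableAt (hS.mem_nhds hz)
  have Hi : DifferentiableAt ℝ hinv (h z) :=
    (hd.smooth_inv.differentiableOn (by simp)).differentiableAt
      (hS'.mem_nhds hz')
  have hcomp : fderiv ℝ (hinv ∘ h) z = (fderiv ℝ hinv (h z)).comp (fderiv ℝ h z) :=
    fderiv_comp z Hi Hh
  have hid : fderiv ℝ (hinv ∘ h) z = ContinuousLinearMap.id ℝ (Euc d) := by
    have heq : (hinv ∘ h) =ᶠ[nhds z] id := by
      filter_upwards [hS.mem_nhds hz] with y hy
      exact hd.left_inv y hy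
    rw [Filter.EventuallyEq.fderiv_eq heq, fderiv_id]
  have key : ∀ v, (fderiv ℝ hinv (h z)) ((fderiv ℝ h z) v) = v := by
    intro v
    have hco := hcomp.symm.trans hid
    calc (fderiv ℝ hinv (h z)) ((fderiv ℝ h z) v)
        = ((fderiv ℝ hinv (h z)).comp (fderiv ℝ h z)) v := rfl
      _ = v := by rw [hco]; rfl
  exact Function.LeftInverse.injective key

lemma seg_deriv_aux {d : ℕ} {S S' : Set (Euc d)} (hS : IsOpen S)
    {h hinv : Euc d → Euc d} (hd : IsSmoothDiffeoOn h hinv S S')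
    (y v : Euc d) (t : ℝ) (j : Fin d) (hyt : y + t • v ∈ S) :
    HasDerivAt (fun u : ℝ => h (y + u • v) j) ((fderiv ℝ h (y + t • v) v) j) t := by
  have hdA : DifferentiableAt ℝ h (y + t • v) :=
    (hd.smooth.differentiableOn (by simp)).differentiableAt (hS.mem_nhds hyt)
  have hc : HasDerivAt (fun u : ℝ => y + u • v) v t := by
    simpa using ((hasDerivAt_id t).smul_const v).const_add y
  have h1 : HasDerivAt (fun u : ℝ => h (y + u • v)) ((fderiv ℝ h (y + t • v)) v) t :=
    hdA.hasFDerivAt.comp_hasDerivAt t hc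
  have h2 := ((EuclideanSpace.proj (𝕜 := ℝ) j).hasFDerivAt).comp_hasDerivAt t h1
  exact h2

end OneToOneAux


section OneToOneCore

/-- **Core lemma.** If the image of a connected axis-separator under a smooth diffeomorphism
is covered by finitely many coordinate level sets, it lies inside a single one. -/
lemma core_single_level {d : ℕ} {S S' : Set (Euc d)} (hS : IsOpen S) (hS' : IsOpen S')
    {h hinv : Euc d → Euc d} (hdiff : IsSmoothDiffeoOn h hinv S S')
    (i : Fin d) (τ : ℝ) (hconn : IsConnected (Gamma S i τ))
    (𝒥 : Finset (Fin d × ℝ))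
    (hcov : ∀ z ∈ Gamma S i τ, ∃ p ∈ 𝒥, h z p.1 = p.2) :
    ∃ p ∈ 𝒥, ∀ z ∈ Gamma S i τ, h z p.1 = p.2 := by
  classical
  set H := Gamma S i τ with hHdef
  have hHsub : H ⊆ S := fun z hz => hz.1
  have hcoord : ∀ z ∈ H, z i = τ := fun z hz => hz.2
  have hmemH : ∀ z : Euc d, z ∈ S → z i = τ → z ∈ H := fun z h1 h2 => ⟨h1, h2⟩
  have hcont : ContinuousOn h S := hdiff.smooth.continuousOn
  have hfcont : ContinuousOn (fderiv ℝ h) S :=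
    hdiff.smooth.continuousOn_fderiv_of_isOpen hS (by exact_mod_cast le_top)
  -- level sets are "open" conditions off the level
  have hlevel_open : ∀ p : Fin d × ℝ, IsOpen (S ∩ h ⁻¹' {u : Euc d | u p.1 ≠ p.2}) := by
    intro p
    refine hcont.isOpen_inter_preimage hS ?_
    have he : {u : Euc d | u p.1 ≠ p.2} = (EuclideanSpace.proj (𝕜 := ℝ) p.1) ⁻¹' ({p.2}ᶜ) := by
      ext u; simp
    rw [he]
    exact isOpen_compl_singleton.preimage (EuclideanSpace.proj (𝕜 := ℝ) p.1).continuous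
  -- local constancy along the separator forces vanishing directional derivatives
  have const_dir : ∀ z ∈ H, ∀ (p : Fin d × ℝ) (ε : ℝ), 0 < ε →
      (∀ y ∈ H, dist y z < ε → h y p.1 = p.2) →
      ∀ v : Euc d, v i = 0 → fderiv ℝ h z v p.1 = 0 := by
    intro z hz p ε hε hloc v hv
    obtain ⟨ρ, hρ, hball⟩ := Metric.isOpen_iff.1 hS z (hHsub hz)
    set δ := min ρ ε / (‖v‖ + 1) with hδdef
    have hnv : (0:ℝ) < ‖v‖ + 1 := by positivity
    have hδ : 0 < δ := div_pos (lt_min hρ hε) hnv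
    have hsmall : ∀ t : ℝ, |t| < δ → dist (z + t • v) z < min ρ ε := by
      intro t ht
      rw [dist_eq_norm, add_sub_cancel_left, norm_smul, Real.norm_eq_abs]
      calc |t| * ‖v‖ ≤ |t| * (‖v‖ + 1) := by
            have := abs_nonneg t; nlinarith
        _ < δ * (‖v‖ + 1) := mul_lt_mul_of_pos_right ht hnv
        _ = min ρ ε := by rw [hδdef]; field_simp
    have hmem : ∀ t : ℝ, |t| < δ → z + t • v ∈ H := by
      intro t ht
      refine hmemH _ (hball (Metric.mem_ball.2 ((hsmall t ht).trans_le (min_le_left _ _)))) ?_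
      simp [PiLp.add_apply, PiLp.smul_apply, hv, hcoord z hz]
    have heqc : ∀ t : ℝ, |t| < δ → h (z + t • v) p.1 = p.2 := by
      intro t ht
      exact hloc _ (hmem t ht) ((hsmall t ht).trans_le (min_le_right _ _))
    have h1 : HasDerivAt (fun u : ℝ => h (z + u • v) p.1)
        ((fderiv ℝ h (z + (0:ℝ) • v) v) p.1) 0 :=
      seg_deriv_aux hS hdiff z v 0 p.1 (by simpa using hHsub hz)
    have h0 : (fun u : ℝ => h (z + u • v) p.1) =ᶠ[nhds (0:ℝ)] fun _ => p.2 := by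
      have hio : Set.Ioo (-δ) δ ∈ nhds (0:ℝ) := Ioo_mem_nhds (by linarith) hδ
      filter_upwards [hio] with t ht
      exact heqc t (abs_lt.2 ⟨ht.1, ht.2⟩)
    have h2 : HasDerivAt (fun u : ℝ => h (z + u • v) p.1) 0 0 :=
      (hasDerivAt_const 0 p.2).congr_of_eventuallyEq h0
    have hu := h1.unique h2
    simpa using hu
  -- the locally-constant neighbourhoods
  set O : Fin d × ℝ → Set (Euc d) :=
    fun p => {x | ∃ ε : ℝ, 0 < ε ∧ ∀ y ∈ H, dist y x < ε → h y p.1 = p.2} with hOdef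
  have hOopen : ∀ p, IsOpen (O p) := by
    intro p
    rw [Metric.isOpen_iff]
    rintro x ⟨ε, hε, hx⟩
    refine ⟨ε/2, by linarith, ?_⟩
    intro x' hx'
    refine ⟨ε/2, by linarith, ?_⟩
    intro y hy hyx'
    refine hx y hy ?_
    rw [Metric.mem_ball] at hx'
    calc dist y x ≤ dist y x' + dist x' x := dist_triangle _ _ _
      _ < ε := by linarith
  have hOdisj : ∀ p ∈ 𝒥, ∀ q ∈ 𝒥, p ≠ q → ∀ z ∈ H, z ∈ O p → z ∈ O q → False := by
    intro p _ q _ hpq z hz hzp hzq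
    obtain ⟨ε1, hε1, hz1⟩ := hzp
    obtain ⟨ε2, hε2, hz2⟩ := hzq
    have hzp1 : h z p.1 = p.2 := hz1 z hz (by simpa using hε1)
    have hzq1 : h z q.1 = q.2 := hz2 z hz (by simpa using hε2)
    by_cases h1 : p.1 = q.1
    · apply hpq
      refine Prod.ext h1 ?_
      rw [← hzp1, ← hzq1, h1]
    · exact dim_contra_aux (fderiv_inj_aux hS hS' hdiff (hHsub hz)) h1
        (fun v hv => const_dir z hz p ε1 hε1 hz1 v hv)
        (fun v hv => const_dir z hz q ε2 hε2 hz2 v hv)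
  -- THE LOCAL CLAIM
  have hlocal : ∀ z ∈ H, ∃ p ∈ 𝒥, z ∈ O p := by
    intro z hz
    have hzS := hHsub hz
    set M : Finset (Fin d × ℝ) := 𝒥.filter (fun p => h z p.1 = p.2) with hMdef
    -- step 1: a ball avoiding all levels not through h z
    have hopen1 : IsOpen (S ∩ ⋂ p ∈ (𝒥 \ M), (S ∩ h ⁻¹' {u : Euc d | u p.1 ≠ p.2})) :=
      hS.inter (isOpen_biInter_finset fun p _ => hlevel_open p)
    have hz1 : z ∈ S ∩ ⋂ p ∈ (𝒥 \ M), (S ∩ h ⁻¹' {u : Euc d | u p.1 ≠ p.2}) := by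
      refine ⟨hzS, Set.mem_biInter fun p hp => ⟨hzS, ?_⟩⟩
      rcases Finset.mem_sdiff.1 hp with ⟨hpJ, hpM⟩
      simp only [hMdef, Finset.mem_filter] at hpM
      exact fun hc => hpM ⟨hpJ, hc⟩
    obtain ⟨r₀, hr₀, hball₀⟩ := Metric.isOpen_iff.1 hopen1 z hz1
    -- main case analysis: is some level degenerate at z?
    by_cases hex : ∃ m ∈ M, ∀ v : Euc d, v i = 0 → fderiv ℝ h z v m.1 = 0
    · obtain ⟨m, hmM, hmdeg⟩ := hex
      have hnondeg : ∀ p ∈ M.erase m, ∃ w : Euc d, w i = 0 ∧ fderiv ℝ h z w p.1 ≠ 0 := by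
        intro p hp
        by_contra hcon
        push_neg at hcon
        have hdegp : ∀ v : Euc d, v i = 0 → fderiv ℝ h z v p.1 = 0 := fun v hv => hcon v hv
        have hpm : p ≠ m := (Finset.mem_erase.1 hp).1
        by_cases h1 : p.1 = m.1
        · apply hpm
          refine Prod.ext h1 ?_
          have hpM := (Finset.mem_filter.1 ((Finset.erase_subset m M) hp)).2
          have hmM' := (Finset.mem_filter.1 hmM).2
          rw [← hpM, ← hmM', h1]
        · exact dim_contra_aux (fderiv_inj_aux hS hS' hdiff hzS) h1 hdegp hmdeg
      -- choose a direction transverse to all nondegenerate levels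
      have hLex : ∀ p ∈ M.erase m, ∃ w ∈ LinearMap.ker (EuclideanSpace.projₗ (𝕜 := ℝ) i),
          ((EuclideanSpace.projₗ (𝕜 := ℝ) p.1) ∘ₗ
            (fderiv ℝ h z : Euc d →L[ℝ] Euc d).toLinearMap) w ≠ 0 := by
        intro p hp
        obtain ⟨w, hw0, hwne⟩ := hnondeg p hp
        exact ⟨w, by simpa [LinearMap.mem_ker] using hw0, by simpa using hwne⟩
      obtain ⟨v, hvW, hvne⟩ := exists_forall_ne_aux _ (M.erase m) _ hLex
      have hvi : v i = 0 := by simpa [LinearMap.mem_ker] using hvW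
      have hvne' : ∀ p ∈ M.erase m, fderiv ℝ h z v p.1 ≠ 0 := by
        intro p hp; simpa using hvne p hp
      -- shrink so that transversality holds on the whole ball
      have hopen2 : IsOpen (Metric.ball z r₀ ∩
          ⋂ p ∈ M.erase m, (S ∩ (fun y => fderiv ℝ h y v p.1) ⁻¹' ({0}ᶜ))) := by
        refine Metric.isOpen_ball.inter (isOpen_biInter_finset fun p _ => ?_)
        have hcf : ContinuousOn (fun y => fderiv ℝ h y v p.1) S := by
          have e1 : Continuous (fun L : Euc d →L[ℝ] Euc d => L v p.1) :=
            (EuclideanSpace.proj (𝕜 := ℝ) p.1).continuous.comp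
              (ContinuousLinearMap.apply ℝ (Euc d) v).continuous
          exact e1.comp_continuousOn hfcont
        exact hcf.isOpen_inter_preimage hS isOpen_compl_singleton
      have hz2 : z ∈ Metric.ball z r₀ ∩
          ⋂ p ∈ M.erase m, (S ∩ (fun y => fderiv ℝ h y v p.1) ⁻¹' ({0}ᶜ)) :=
        ⟨Metric.mem_ball_self hr₀, Set.mem_biInter fun p hp => ⟨hzS, hvne' p hp⟩⟩
      obtain ⟨r₁, hr₁, hball₁⟩ := Metric.isOpen_iff.1 hopen2 z hz2
      refine ⟨m, (Finset.filter_subset _ _) hmM, r₁/2, by linarith, ?_⟩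
      intro y hy hyz
      by_contra hym
      have hyS : y ∈ S := hHsub hy
      have hopen3 : IsOpen (Metric.ball z r₁ ∩ (S ∩ h ⁻¹' {u : Euc d | u m.1 ≠ m.2})) :=
        Metric.isOpen_ball.inter (hlevel_open m)
      have hy3 : y ∈ Metric.ball z r₁ ∩ (S ∩ h ⁻¹' {u : Euc d | u m.1 ≠ m.2}) :=
        ⟨Metric.mem_ball.2 (by linarith), hyS, hym⟩
      obtain ⟨ρ, hρ, hballρ⟩ := Metric.isOpen_iff.1 hopen3 y hy3
      set δ := ρ / (‖v‖ + 1) with hδdef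
      have hnv : (0:ℝ) < ‖v‖ + 1 := by positivity
      have hδ : 0 < δ := div_pos hρ hnv
      have hseg : ∀ t ∈ Set.Icc (0:ℝ) δ,
          y + t • v ∈ Metric.ball z r₁ ∩ (S ∩ h ⁻¹' {u : Euc d | u m.1 ≠ m.2}) := by
        intro t ht
        apply hballρ
        rw [Metric.mem_ball, dist_eq_norm, add_sub_cancel_left, norm_smul, Real.norm_eq_abs]
        have h1 : |t| ≤ δ := by rw [abs_of_nonneg ht.1]; exact ht.2
        calc |t| * ‖v‖ ≤ δ * ‖v‖ := mul_le_mul_of_nonneg_right h1 (norm_nonneg v)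
          _ < δ * (‖v‖ + 1) := by nlinarith
          _ = ρ := by rw [hδdef]; field_simp
      have hsegS : ∀ t ∈ Set.Icc (0:ℝ) δ, y + t • v ∈ S := fun t ht => (hseg t ht).2.1
      have hsegH : ∀ t ∈ Set.Icc (0:ℝ) δ, y + t • v ∈ H := by
        intro t ht
        exact hmemH _ (hsegS t ht)
          (by simp [PiLp.add_apply, PiLp.smul_apply, hvi, hcoord y hy])
      have hseg01 : ∀ t ∈ Set.Icc (0:ℝ) δ, y + t • v ∈ Metric.ball z r₀ ∩
          ⋂ p ∈ M.erase m, (S ∩ (fun y => fderiv ℝ h y v p.1) ⁻¹' ({0}ᶜ)) := by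
        intro t ht
        exact hball₁ (hseg t ht).1
      have hcov2 : ∀ t ∈ Set.Icc (0:ℝ) δ, ∃ p ∈ M.erase m, h (y + t • v) p.1 - p.2 = 0 := by
        intro t ht
        obtain ⟨p, hpJ, hpz⟩ := hcov _ (hsegH t ht)
        have hmem0 := hball₀ (hseg01 t ht).1
        have hpM : p ∈ M := by
          by_contra hpM
          have hmem0' := (Set.mem_iInter₂.1 hmem0.2) p (Finset.mem_sdiff.2 ⟨hpJ, hpM⟩)
          exact hmem0'.2 hpz
        have hpm : p ≠ m := by
          intro hpe
          exact (hseg t ht).2.2 (hpe ▸ hpz)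
        exact ⟨p, Finset.mem_erase.2 ⟨hpm, hpM⟩, by rw [hpz]; ring⟩
      refine segment_contra_aux (M.erase m)
        (f := fun p t => h (y + t • v) p.1 - p.2)
        (f' := fun p t => fderiv ℝ h (y + t • v) v p.1) hδ ?_ ?_ hcov2
      · intro p _ t ht
        exact (seg_deriv_aux hS hdiff y v t p.1 (hsegS t ht)).sub_const p.2
      · intro p hp t ht
        have := (Set.mem_iInter₂.1 (hseg01 t ht).2) p hp
        exact this.2
    · -- no degenerate level: contradiction
      exfalso
      push_neg at hex
      have hnondeg : ∀ p ∈ M, ∃ w : Euc d, w i = 0 ∧ fderiv ℝ h z w p.1 ≠ 0 := hex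
      have hLex : ∀ p ∈ M, ∃ w ∈ LinearMap.ker (EuclideanSpace.projₗ (𝕜 := ℝ) i),
          ((EuclideanSpace.projₗ (𝕜 := ℝ) p.1) ∘ₗ
            (fderiv ℝ h z : Euc d →L[ℝ] Euc d).toLinearMap) w ≠ 0 := by
        intro p hp
        obtain ⟨w, hw0, hwne⟩ := hnondeg p hp
        exact ⟨w, by simpa [LinearMap.mem_ker] using hw0, by simpa using hwne⟩
      obtain ⟨v, hvW, hvne⟩ := exists_forall_ne_aux _ M _ hLex
      have hvi : v i = 0 := by simpa [LinearMap.mem_ker] using hvW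
      have hvne' : ∀ p ∈ M, fderiv ℝ h z v p.1 ≠ 0 := by
        intro p hp; simpa using hvne p hp
      have hopen2 : IsOpen (Metric.ball z r₀ ∩
          ⋂ p ∈ M, (S ∩ (fun y => fderiv ℝ h y v p.1) ⁻¹' ({0}ᶜ))) := by
        refine Metric.isOpen_ball.inter (isOpen_biInter_finset fun p _ => ?_)
        have hcf : ContinuousOn (fun y => fderiv ℝ h y v p.1) S := by
          have e1 : Continuous (fun L : Euc d →L[ℝ] Euc d => L v p.1) :=
            (EuclideanSpace.proj (𝕜 := ℝ) p.1).continuous.comp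
              (ContinuousLinearMap.apply ℝ (Euc d) v).continuous
          exact e1.comp_continuousOn hfcont
        exact hcf.isOpen_inter_preimage hS isOpen_compl_singleton
      have hz2 : z ∈ Metric.ball z r₀ ∩
          ⋂ p ∈ M, (S ∩ (fun y => fderiv ℝ h y v p.1) ⁻¹' ({0}ᶜ)) :=
        ⟨Metric.mem_ball_self hr₀, Set.mem_biInter fun p hp => ⟨hzS, hvne' p hp⟩⟩
      obtain ⟨r₁, hr₁, hball₁⟩ := Metric.isOpen_iff.1 hopen2 z hz2
      set δ := r₁ / (‖v‖ + 1) with hδdef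
      have hnv : (0:ℝ) < ‖v‖ + 1 := by positivity
      have hδ : 0 < δ := div_pos hr₁ hnv
      have hseg : ∀ t ∈ Set.Icc (0:ℝ) δ, z + t • v ∈ Metric.ball z r₁ := by
        intro t ht
        rw [Metric.mem_ball, dist_eq_norm, add_sub_cancel_left, norm_smul, Real.norm_eq_abs]
        have h1 : |t| ≤ δ := by rw [abs_of_nonneg ht.1]; exact ht.2
        calc |t| * ‖v‖ ≤ δ * ‖v‖ := mul_le_mul_of_nonneg_right h1 (norm_nonneg v)
          _ < δ * (‖v‖ + 1) := by nlinarith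
          _ = r₁ := by rw [hδdef]; field_simp
      have hseg01 : ∀ t ∈ Set.Icc (0:ℝ) δ, z + t • v ∈ Metric.ball z r₀ ∩
          ⋂ p ∈ M, (S ∩ (fun y => fderiv ℝ h y v p.1) ⁻¹' ({0}ᶜ)) :=
        fun t ht => hball₁ (hseg t ht)
      have hsegS : ∀ t ∈ Set.Icc (0:ℝ) δ, z + t • v ∈ S := by
        intro t ht
        exact (hball₀ (hseg01 t ht).1).1
      have hsegH : ∀ t ∈ Set.Icc (0:ℝ) δ, z + t • v ∈ H := by
        intro t ht
        exact hmemH _ (hsegS t ht)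
          (by simp [PiLp.add_apply, PiLp.smul_apply, hvi, hcoord z hz])
      have hcov2 : ∀ t ∈ Set.Icc (0:ℝ) δ, ∃ p ∈ M, h (z + t • v) p.1 - p.2 = 0 := by
        intro t ht
        obtain ⟨p, hpJ, hpz⟩ := hcov _ (hsegH t ht)
        have hmem0 := hball₀ (hseg01 t ht).1
        have hpM : p ∈ M := by
          by_contra hpM
          have hmem0' := (Set.mem_iInter₂.1 hmem0.2) p (Finset.mem_sdiff.2 ⟨hpJ, hpM⟩)
          exact hmem0'.2 hpz
        exact ⟨p, hpM, by rw [hpz]; ring⟩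
      refine segment_contra_aux M
        (f := fun p t => h (z + t • v) p.1 - p.2)
        (f' := fun p t => fderiv ℝ h (z + t • v) v p.1) hδ ?_ ?_ hcov2
      · intro p _ t ht
        exact (seg_deriv_aux hS hdiff z v t p.1 (hsegS t ht)).sub_const p.2
      · intro p hp t ht
        have := (Set.mem_iInter₂.1 (hseg01 t ht).2) p hp
        exact this.2
  -- GLOBAL: connectedness forces a single level
  obtain ⟨z₀, hz₀⟩ := hconn.nonempty
  obtain ⟨p₀, hp₀, hz₀O⟩ := hlocal z₀ hz₀
  have hsubU : H ⊆ O p₀ ∪ ⋃ q ∈ 𝒥.erase p₀, O q := by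
    intro z hz
    obtain ⟨p, hpJ, hpO⟩ := hlocal z hz
    by_cases hpp : p = p₀
    · exact Or.inl (hpp ▸ hpO)
    · exact Or.inr (Set.mem_biUnion (Finset.mem_erase.2 ⟨hpp, hpJ⟩) hpO)
  have hvopen : IsOpen (⋃ q ∈ 𝒥.erase p₀, O q) :=
    isOpen_biUnion fun q _ => hOopen q
  have hempty : ¬ (H ∩ (⋃ q ∈ 𝒥.erase p₀, O q)).Nonempty := by
    intro hne
    obtain ⟨x, hxH, hxU⟩ := hconn.isPreconnected (O p₀) _ (hOopen p₀) hvopen hsubU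
      ⟨z₀, hz₀, hz₀O⟩ hne
    obtain ⟨q, hq, hxq⟩ := Set.mem_iUnion₂.1 hxU.2
    have hq' := Finset.mem_erase.1 hq
    exact hOdisj p₀ hp₀ q hq'.2 (Ne.symm hq'.1) x hxH hxU.1 hxq
  refine ⟨p₀, hp₀, ?_⟩
  intro z hz
  have hzO : z ∈ O p₀ := by
    rcases hsubU hz with hc | hc
    · exact hc
    · exact absurd ⟨z, hz, hc⟩ hempty
  obtain ⟨ε, hε, hloc⟩ := hzO
  exact hloc z hz (by simpa using hε)

end OneToOneCore


section OneToOneGlue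

lemma IsSmoothDiffeoOn.symm_aux {d : ℕ} {h hinv : Euc d → Euc d} {S S' : Set (Euc d)}
    (hd : IsSmoothDiffeoOn h hinv S S') : IsSmoothDiffeoOn hinv h S' S :=
  ⟨hd.mapsTo_inv, hd.mapsTo, hd.right_inv, hd.left_inv, hd.smooth_inv, hd.smooth⟩

lemma image_image_of_leftInv_aux {α : Type*} {f g : α → α} {A : Set α}
    (hfg : ∀ a ∈ A, g (f a) = a) : g '' (f '' A) = A := by
  ext x
  constructor
  · rintro ⟨y, ⟨a, ha, rfl⟩, rfl⟩
    rw [hfg a ha]; exact ha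
  · intro hx
    exact ⟨f x, ⟨x, hx, rfl⟩, hfg x hx⟩

lemma gamma_subset_aux {d : ℕ} {S : Set (Euc d)} {i : Fin d} {τ : ℝ} : Gamma S i τ ⊆ S :=
  fun _ hz => hz.1

/-- Two axis separators of an open set, one contained in the other and nonempty, coincide. -/
lemma gamma_eq_of_subset_aux {d : ℕ} {S : Set (Euc d)} (hS : IsOpen S) {i i' : Fin d}
    {τ τ' : ℝ} (hne : (Gamma S i τ).Nonempty) (hsub : Gamma S i τ ⊆ Gamma S i' τ') :
    Gamma S i τ = Gamma S i' τ' := by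
  obtain ⟨z, hzS, hzi⟩ := hne
  by_cases hii : i = i'
  · subst hii
    have hτ' : τ = τ' := by
      have := (hsub ⟨hzS, hzi⟩).2
      rw [← hzi, this]
    rw [hτ']
  · exfalso
    obtain ⟨ρ, hρ, hball⟩ := Metric.isOpen_iff.1 hS z hzS
    set w : Euc d := EuclideanSpace.single i' (ρ/2) with hw
    have h1 : z + w ∈ S := by
      apply hball
      rw [Metric.mem_ball, dist_eq_norm, add_sub_cancel_left, hw, EuclideanSpace.norm_single]
      rw [Real.norm_eq_abs, abs_of_pos (by linarith)]
      linarith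
    have h2 : z + w ∈ Gamma S i τ := by
      refine ⟨h1, ?_⟩
      rw [PiLp.add_apply, hw]
      simp [EuclideanSpace.single_apply, hii, hzi]
    have h3 := (hsub h2).2
    have h4 := (hsub ⟨hzS, hzi⟩).2
    rw [PiLp.add_apply, hw, h4] at h3
    simp [EuclideanSpace.single_apply] at h3
    linarith

/-- Forward half: every separator in `𝒢` is mapped into some separator of `𝒢'`. -/
lemma forward_aux {d : ℕ} {S S' : Set (Euc d)} (hS : IsOpen S) (hS' : IsOpen S')
    {h hinv : Euc d → Euc d} (hdiff : IsSmoothDiffeoOn h hinv S S')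
    (𝒢 𝒢' : Set (Set (Euc d))) (h𝒢'fin : 𝒢'.Finite)
    (h𝒢 : ∀ H ∈ 𝒢, ∃ (i : Fin d) (τ : ℝ), H = Gamma S i τ ∧ IsConnected (Gamma S i τ))
    (h𝒢' : ∀ H' ∈ 𝒢', ∃ p : Fin d × ℝ, H' = Gamma S' p.1 p.2)
    (hsub : h '' (⋃₀ 𝒢) ⊆ ⋃₀ 𝒢') :
    ∀ H ∈ 𝒢, ∃ H' ∈ 𝒢', h '' H ⊆ H' := by
  classical
  intro H hH
  obtain ⟨i, τ, hHeq, hconn⟩ := h𝒢 H hH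
  choose rep hrep using h𝒢'
  set 𝒥 : Finset (Fin d × ℝ) := h𝒢'fin.toFinset.attach.image
    (fun a => rep a.1 (h𝒢'fin.mem_toFinset.1 a.2)) with h𝒥
  have hcov : ∀ z ∈ Gamma S i τ, ∃ p ∈ 𝒥, h z p.1 = p.2 := by
    intro z hz
    have hzG : h z ∈ ⋃₀ 𝒢' := by
      apply hsub
      refine ⟨z, ⟨H, hH, ?_⟩, rfl⟩
      rw [hHeq]; exact hz
    obtain ⟨H', hH', hzH'⟩ := hzG
    refine ⟨rep H' hH', ?_, ?_⟩
    · exact Finset.mem_image.2 ⟨⟨H', h𝒢'fin.mem_toFinset.2 hH'⟩, Finset.mem_attach _ _, rfl⟩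
    · have hre := hrep H' hH'
      rw [hre] at hzH'
      exact hzH'.2
  obtain ⟨p, hpJ, hall⟩ := core_single_level hS hS' hdiff i τ hconn 𝒥 hcov
  obtain ⟨a, _, hpa⟩ := Finset.mem_image.1 hpJ
  have haG : a.1 ∈ 𝒢' := h𝒢'fin.mem_toFinset.1 a.2
  refine ⟨a.1, haG, ?_⟩
  rintro x ⟨z, hz, rfl⟩
  rw [hHeq] at hz
  have hpa' : rep a.1 haG = p := hpa
  rw [hrep a.1 haG, hpa']
  exact ⟨hdiff.mapsTo hz.1, hall z hz⟩

end OneToOneGlue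

/-- **One-to-one recovery of separators (Proposition).** -/
theorem one_to_one_recovery_of_separators
    {d : ℕ} {S S' : Set (Euc d)} (hS : IsOpen S) (hSc : IsConnected S)
    (hS' : IsOpen S') (hS'c : IsConnected S')
    {h hinv : Euc d → Euc d} (hdiff : IsSmoothDiffeoOn h hinv S S')
    (𝒢 𝒢' : Set (Set (Euc d))) (h𝒢fin : 𝒢.Finite) (h𝒢'fin : 𝒢'.Finite)
    (h𝒢 : ∀ H ∈ 𝒢, ∃ (i : Fin d) (τ : ℝ), H = Gamma S i τ ∧ IsAxisSeparator S i τ)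
    (h𝒢' : ∀ H' ∈ 𝒢', ∃ (j : Fin d) (τ : ℝ), H' = Gamma S' j τ ∧ IsAxisSeparator S' j τ)
    (hG : h '' (⋃₀ 𝒢) = ⋃₀ 𝒢') :
    (fun H => h '' H) '' 𝒢 = 𝒢' ∧ Set.InjOn (fun H => h '' H) 𝒢 := by
  classical
  have hGS : ⋃₀ 𝒢 ⊆ S := by
    rintro x ⟨H, hH, hx⟩
    obtain ⟨i, τ, hHeq, _⟩ := h𝒢 H hH
    rw [hHeq] at hx; exact hx.1
  have hinvG : hinv '' (⋃₀ 𝒢') = ⋃₀ 𝒢 := by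
    rw [← hG]
    exact image_image_of_leftInv_aux (fun a ha => hdiff.left_inv a (hGS ha))
  have h𝒢c : ∀ H ∈ 𝒢, ∃ (i : Fin d) (τ : ℝ), H = Gamma S i τ ∧ IsConnected (Gamma S i τ) := by
    intro H hH; obtain ⟨i, τ, e, hsep⟩ := h𝒢 H hH; exact ⟨i, τ, e, hsep.1⟩
  have h𝒢'c : ∀ H' ∈ 𝒢', ∃ (i : Fin d) (τ : ℝ),
      H' = Gamma S' i τ ∧ IsConnected (Gamma S' i τ) := by
    intro H' hH'; obtain ⟨i, τ, e, hsep⟩ := h𝒢' H' hH'; exact ⟨i, τ, e, hsep.1⟩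
  have h𝒢p : ∀ H ∈ 𝒢, ∃ p : Fin d × ℝ, H = Gamma S p.1 p.2 := by
    intro H hH; obtain ⟨i, τ, e, _⟩ := h𝒢 H hH; exact ⟨(i, τ), e⟩
  have h𝒢'p : ∀ H' ∈ 𝒢', ∃ p : Fin d × ℝ, H' = Gamma S' p.1 p.2 := by
    intro H' hH'; obtain ⟨i, τ, e, _⟩ := h𝒢' H' hH'; exact ⟨(i, τ), e⟩
  have fwd := forward_aux hS hS' hdiff 𝒢 𝒢' h𝒢'fin h𝒢c h𝒢'p hG.le
  have bwd := forward_aux hS' hS hdiff.symm_aux 𝒢' 𝒢 h𝒢fin h𝒢'c h𝒢p hinvG.le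
  have claimA : ∀ H ∈ 𝒢, h '' H ∈ 𝒢' := by
    intro H hH
    obtain ⟨H', hH', hsub1⟩ := fwd H hH
    obtain ⟨H₂, hH₂, hsub2⟩ := bwd H' hH'
    obtain ⟨i, τ, hHeq, hconn⟩ := h𝒢c H hH
    obtain ⟨p₂, hH₂eq⟩ := h𝒢p H₂ hH₂
    have hHsubS : H ⊆ S := by rw [hHeq]; exact gamma_subset_aux
    have hHH₂ : H ⊆ H₂ := by
      intro x hx
      have hmem : hinv (h x) ∈ H₂ := hsub2 ⟨h x, hsub1 ⟨x, hx, rfl⟩, rfl⟩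
      rwa [hdiff.left_inv x (hHsubS hx)] at hmem
    have hHeq₂ : H = H₂ := by
      rw [hHeq, hH₂eq]
      rw [hHeq, hH₂eq] at hHH₂
      exact gamma_eq_of_subset_aux hS hconn.nonempty hHH₂
    have hsub3 : H' ⊆ h '' H := by
      intro x' hx'
      have hx'S' : x' ∈ S' := by
        obtain ⟨p', hH'eq⟩ := h𝒢'p H' hH'
        rw [hH'eq] at hx'; exact hx'.1
      have hmem : hinv x' ∈ H₂ := hsub2 ⟨x', hx', rfl⟩
      rw [← hHeq₂] at hmem
      exact ⟨hinv x', hmem, hdiff.right_inv x' hx'S'⟩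
    have hfin : h '' H = H' := Set.Subset.antisymm hsub1 hsub3
    rw [hfin]; exact hH'
  have claimB : ∀ H' ∈ 𝒢', ∃ H ∈ 𝒢, h '' H = H' := by
    intro H' hH'
    obtain ⟨H, hH, hsub2⟩ := bwd H' hH'
    obtain ⟨H'', hH'', hsub1⟩ := fwd H hH
    obtain ⟨i', τ', hH'eq, hconn'⟩ := h𝒢'c H' hH'
    obtain ⟨p'', hH''eq⟩ := h𝒢'p H'' hH''
    have hH'S' : H' ⊆ S' := by rw [hH'eq]; exact gamma_subset_aux
    have hH'H'' : H' ⊆ H'' := by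
      intro x' hx'
      have h1 : hinv x' ∈ H := hsub2 ⟨x', hx', rfl⟩
      have h2 : h (hinv x') ∈ H'' := hsub1 ⟨hinv x', h1, rfl⟩
      rwa [hdiff.right_inv x' (hH'S' hx')] at h2
    have hH'eq₂ : H' = H'' := by
      rw [hH'eq, hH''eq]
      rw [hH'eq, hH''eq] at hH'H''
      exact gamma_eq_of_subset_aux hS' hconn'.nonempty hH'H''
    refine ⟨H, hH, Set.Subset.antisymm (hH'eq₂ ▸ hsub1) ?_⟩
    intro x' hx'
    have h1 : hinv x' ∈ H := hsub2 ⟨x', hx', rfl⟩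
    exact ⟨hinv x', h1, hdiff.right_inv x' (hH'S' hx')⟩
  constructor
  · ext X
    constructor
    · rintro ⟨H, hH, rfl⟩
      exact claimA H hH
    · intro hX
      obtain ⟨H, hH, hEq⟩ := claimB X hX
      exact ⟨H, hH, hEq⟩
  · intro H₁ h₁ H₂ h₂ hEq
    obtain ⟨i1, τ1, e1, _⟩ := h𝒢 H₁ h₁
    obtain ⟨i2, τ2, e2, _⟩ := h𝒢 H₂ h₂
    have hs1 : H₁ ⊆ S := by rw [e1]; exact gamma_subset_aux
    have hs2 : H₂ ⊆ S := by rw [e2]; exact gamma_subset_aux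
    have hEq' : h '' H₁ = h '' H₂ := hEq
    have himg := congrArg (Set.image hinv) hEq'
    rwa [image_image_of_leftInv_aux (fun a ha => hdiff.left_inv a (hs1 ha)),
        image_image_of_leftInv_aux (fun a ha => hdiff.left_inv a (hs2 ha))] at himg
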